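/- arXiv:2312.10845 — 2 statements merged into one kernel-verified Lean document; each statement's English description precedes it below -/
import Mathlib

section
/- Let 𝒞 ⊆ 𝔞 be a nonempty finitely generated convex set with asymptotic cone C, and let 𝔟 ⊆ 𝔞 be a linear subspace such that dim(C∨ + 𝔟) = dim 𝔞. Let ξ ∈ 𝔟⊥ be such that ξ ∈ p⊥(C∨), and assume ξ is in general position in the following sense: for every face F of 𝒞 such that the dimension of the linear span of p⊥(𝔞_F^+) is strictly smaller than dim 𝔟⊥, one has ξ ∉ p⊥(𝔞_F^+). Then the orthogonal projection p induces a bijection between ⋃_{F ∈ ℱ(𝒞,ξ)} F and p(𝒞). -/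
open Pointwise

variable {E : Type*} [NormedAddCommGroup E] [InnerProductSpace ℝ E] [FiniteDimensional ℝ E]

/-- A finitely generated convex set: a finite intersection of closed half-spaces. -/
def IsFGConvex (C : Set E) : Prop :=
  ∃ s : Finset (E × ℝ), C = {X | ∀ p ∈ s, (inner ℝ p.1 X : ℝ) ≤ p.2}

/-- The tangent cone `T_C(H) = ℝ≥0 · (C - H)`. -/
def tangCone (C : Set E) (H : E) : Set E :=
  {X | ∃ t : ℝ, 0 ≤ t ∧ ∃ c ∈ C, X = t • (c - H)}

/-- The normal cone `N_C(H) = {Y | (Y,X) ≤ 0 for all X ∈ T_C(H)}`. -/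
def normCone (C : Set E) (H : E) : Set E :=
  {Y | ∀ X ∈ tangCone C H, (inner ℝ Y X : ℝ) ≤ 0}

/-- The asymptotic cone of `C`: the set of `X` with `C + ℝ≥0 · X = C`. -/
def asympCone (C : Set E) : Set E :=
  {X | C + {Y | ∃ t : ℝ, 0 ≤ t ∧ Y = t • X} = C}

/-- The dual cone `C∨ = {Y | (Y,X) ≤ 0 for all X ∈ C}`. -/
def polarCone (C : Set E) : Set E :=
  {Y | ∀ X ∈ C, (inner ℝ Y X : ℝ) ≤ 0}

/-- A face of `C`: the (nonempty) intersection of `C` with a supporting affine hyperplane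
`{H | (λ,H) = c}`, where `(λ,H) ≤ c` on all of `C` (the case `λ = 0` being allowed). -/
def IsFace (C F : Set E) : Prop :=
  F.Nonempty ∧ ∃ (lam : E) (c : ℝ), (∀ H ∈ C, (inner ℝ lam H : ℝ) ≤ c) ∧
    F = {H | H ∈ C ∧ (inner ℝ lam H : ℝ) = c}

/-- `𝔞_F^+`: the relative interior of the normal cone `N_C(X_F)`, for `X_F` in the relative
interior of the face `F` (this normal cone does not depend on the choice of such `X_F`). -/
def aFplus (C F : Set E) : Set E :=
  ⋃ X ∈ intrinsicInterior ℝ F, intrinsicInterior ℝ (normCone C X)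


/-- The orthogonal projection onto a subspace `b`, viewed as a map `E → E`. -/
noncomputable def projOn (b : Submodule ℝ E) (x : E) : E :=
  (b.orthogonalProjection x : E)


open RealInnerProductSpace

section FarkasSection
variable {F : Type*} [NormedAddCommGroup F] [InnerProductSpace ℝ F] [FiniteDimensional ℝ F]
variable {ι : Type*} [Fintype ι]

/-- The finitely generated cone on the family `v`. -/
def coneS (v : ι → F) : Set F := {x | ∃ t : ι → ℝ, (∀ i, 0 ≤ t i) ∧ x = ∑ i, t i • v i}

lemma zero_mem_coneS (v : ι → F) : (0 : F) ∈ coneS v :=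
  ⟨0, fun _ => le_refl _, by simp⟩

lemma coneS_convex (v : ι → F) : Convex ℝ (coneS v) := by
  rintro x ⟨t, ht, rfl⟩ y ⟨u, hu, rfl⟩ a b ha hb hab
  refine ⟨fun i => a * t i + b * u i,
    fun i => add_nonneg (mul_nonneg ha (ht i)) (mul_nonneg hb (hu i)), ?_⟩
  simp only [add_smul, mul_smul, Finset.sum_add_distrib, Finset.smul_sum]

lemma smul_mem_coneS (v : ι → F) (i : ι) {r : ℝ} (hr : 0 ≤ r) : r • v i ∈ coneS v := by
  classical
  refine ⟨fun j => if j = i then r else 0,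
    fun j => by dsimp only; split_ifs; exacts [hr, le_refl 0], ?_⟩
  have : ∀ j, (if j = i then r else 0) • v j = if j = i then r • v j else 0 := by
    intro j; split_ifs <;> simp
  rw [Finset.sum_congr rfl (fun j _ => this j), Finset.sum_ite_eq' Finset.univ i (fun j => r • v j)]
  simp

/-- The linear map sending coefficients to the corresponding combination. -/
def sumSmul (v : ι → F) : (ι → ℝ) →ₗ[ℝ] F where
  toFun := fun t => ∑ i, t i • v i
  map_add' := by intro t u; simp [add_smul, Finset.sum_add_distrib]
  map_smul' := by intro r t; simp [smul_smul, Finset.smul_sum]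

lemma coneS_carath_aux (v : ι → F) : ∀ (n : ℕ) (τ : Finset ι), τ.card ≤ n →
    ∀ t : ι → ℝ, (∀ i, 0 ≤ t i) →
    ∃ σ : Finset ι, LinearIndependent ℝ (fun i : σ => v i) ∧
      ∃ u : ι → ℝ, (∀ i, 0 ≤ u i) ∧ ∑ i ∈ σ, u i • v i = ∑ i ∈ τ, t i • v i := by
  classical
  intro n
  induction n with
  | zero =>
    intro τ hτ t ht
    rw [Nat.le_zero, Finset.card_eq_zero] at hτ
    subst hτ
    exact ⟨∅, linearIndependent_empty_type, t, ht, rfl⟩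
  | succ n ih =>
    intro τ hτ t ht
    by_cases hli : LinearIndependent ℝ (fun i : τ => v i)
    · exact ⟨τ, hli, t, ht, rfl⟩
    · obtain ⟨g, hg0, j, hj⟩ := Fintype.not_linearIndependent_iff.mp hli
      obtain ⟨g, hg0, j, hj⟩ : ∃ g : τ → ℝ, ∑ i, g i • v i = 0 ∧ ∃ j, 0 < g j := by
        rcases hj.lt_or_gt with h | h
        · exact ⟨-g, by simpa [neg_smul] using hg0, j, by simpa using h⟩
        · exact ⟨g, hg0, j, h⟩
      set g' : ι → ℝ := fun i => if h : i ∈ τ then g ⟨i, h⟩ else 0 with hg'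
      have hg'sum : ∑ i ∈ τ, g' i • v i = 0 := by
        rw [← Finset.sum_coe_sort τ (fun i => g' i • v i)]
        rw [← hg0]
        exact Finset.sum_congr rfl (fun i _ => by simp [hg', i.2])
      have hg'j : 0 < g' (j : ι) := by simp [hg', j.2, hj]
      set P : Finset ι := τ.filter (fun i => 0 < g' i) with hP
      have hPne : P.Nonempty := ⟨j, by simp [hP, j.2, hg'j]⟩
      obtain ⟨i0, hi0P, hi0min⟩ := P.exists_min_image (fun i => t i / g' i) hPne
      have hi0τ : i0 ∈ τ := (Finset.mem_filter.mp hi0P).1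
      have hi0pos : 0 < g' i0 := (Finset.mem_filter.mp hi0P).2
      set θ : ℝ := t i0 / g' i0 with hθ
      have hθ0 : 0 ≤ θ := div_nonneg (ht i0) hi0pos.le
      set t' : ι → ℝ := fun i => if i ∈ τ.erase i0 then t i - θ * g' i else 0 with ht'
      have ht'nonneg : ∀ i, 0 ≤ t' i := by
        intro i
        rw [ht']
        dsimp only
        split_ifs with h
        · have hiτ : i ∈ τ := Finset.mem_of_mem_erase h
          rcases le_or_gt (g' i) 0 with hgi | hgi
          · nlinarith [ht i]
          · have : i ∈ P := Finset.mem_filter.mpr ⟨hiτ, hgi⟩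
            have hle : θ ≤ t i / g' i := hi0min i this
            have := (le_div_iff₀ hgi).mp hle
            linarith
        · exact le_refl 0
      have hsum' : ∑ i ∈ τ.erase i0, t' i • v i = ∑ i ∈ τ, t i • v i := by
        have h1 : ∑ i ∈ τ.erase i0, t' i • v i = ∑ i ∈ τ.erase i0, (t i - θ * g' i) • v i :=
          Finset.sum_congr rfl (fun i hi => by rw [ht']; simp [hi])
        have ht'i0 : (t i0 - θ * g' i0) = 0 := by
          rw [hθ, div_mul_cancel₀ _ hi0pos.ne', sub_self]
        have h2 : ∑ i ∈ τ.erase i0, (t i - θ * g' i) • v i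
            = ∑ i ∈ τ, (t i - θ * g' i) • v i :=
          Finset.sum_erase τ (by rw [ht'i0, zero_smul])
        have h3 : ∑ i ∈ τ, (t i - θ * g' i) • v i
            = ∑ i ∈ τ, t i • v i - θ • ∑ i ∈ τ, g' i • v i := by
          rw [Finset.smul_sum]
          rw [← Finset.sum_sub_distrib]
          exact Finset.sum_congr rfl (fun i _ => by rw [sub_smul, smul_smul])
        rw [h1, h2, h3, hg'sum, smul_zero, sub_zero]
      have hcard : (τ.erase i0).card ≤ n := by
        have := Finset.card_erase_of_mem hi0τ
        omega
      obtain ⟨σ, hσ, u, hu, huv⟩ := ih (τ.erase i0) hcard t' ht'nonneg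
      exact ⟨σ, hσ, u, hu, by rw [huv, hsum']⟩

lemma coneS_carath (v : ι → F) {x : F} (hx : x ∈ coneS v) :
    ∃ σ : Finset ι, LinearIndependent ℝ (fun i : σ => v i) ∧
      ∃ t : ι → ℝ, (∀ i, 0 ≤ t i) ∧ x = ∑ i ∈ σ, t i • v i := by
  obtain ⟨t, ht, rfl⟩ := hx
  obtain ⟨σ, hσ, u, hu, huv⟩ := coneS_carath_aux v (Finset.univ.card) Finset.univ (le_refl _) t ht
  exact ⟨σ, hσ, u, hu, huv.symm⟩

lemma isClosed_indep_part (v : ι → F) (σ : Finset ι)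
    (hσ : LinearIndependent ℝ (fun i : σ => v i)) :
    IsClosed {x : F | ∃ t : ι → ℝ, (∀ i, 0 ≤ t i) ∧ x = ∑ i ∈ σ, t i • v i} := by
  classical
  have hset : {x : F | ∃ t : ι → ℝ, (∀ i, 0 ≤ t i) ∧ x = ∑ i ∈ σ, t i • v i}
      = (sumSmul (fun i : σ => v i)) '' {u : σ → ℝ | ∀ i, 0 ≤ u i} := by
    ext x
    constructor
    · rintro ⟨t, ht, rfl⟩
      refine ⟨fun i => t i, fun i => ht i, ?_⟩
      show ∑ i : σ, t i • v i = _
      rw [Finset.sum_coe_sort σ (fun i => t i • v i)]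
    · rintro ⟨u, hu, rfl⟩
      refine ⟨fun i => if h : i ∈ σ then u ⟨i, h⟩ else 0,
        fun i => by dsimp only; split_ifs with h; exacts [hu ⟨i, h⟩, le_refl 0], ?_⟩
      show _ = ∑ i ∈ σ, (if h : i ∈ σ then u ⟨i, h⟩ else 0) • v i
      rw [← Finset.sum_coe_sort σ (fun i => (if h : i ∈ σ then u ⟨i, h⟩ else 0) • v i)]
      exact Finset.sum_congr rfl (fun i _ => by simp [i.2])
  rw [hset]
  have hker : LinearMap.ker (sumSmul (fun i : σ => v i)) = ⊥ := by
    rw [LinearMap.ker_eq_bot']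
    intro m hm
    have := Fintype.linearIndependent_iff.mp hσ m hm
    funext i; exact this i
  have hclosed : IsClosed {u : σ → ℝ | ∀ i, 0 ≤ u i} := by
    have : {u : σ → ℝ | ∀ i, 0 ≤ u i} = ⋂ i, {u : σ → ℝ | 0 ≤ u i} := by
      ext u; simp
    rw [this]
    exact isClosed_iInter (fun i => isClosed_le continuous_const (continuous_apply i))
  exact ((sumSmul (fun i : σ => v i)).isClosedEmbedding_of_injective hker).isClosedMap _ hclosed

lemma coneS_isClosed (v : ι → F) : IsClosed (coneS v) := by
  classical
  have hrw : coneS v = ⋃ σ ∈ {σ : Finset ι | LinearIndependent ℝ (fun i : σ => v i)},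
      {x : F | ∃ t : ι → ℝ, (∀ i, 0 ≤ t i) ∧ x = ∑ i ∈ σ, t i • v i} := by
    ext x
    simp only [Set.mem_iUnion, Set.mem_setOf_eq, exists_prop]
    constructor
    · intro hx
      obtain ⟨σ, hσ, t, ht, hx⟩ := coneS_carath v hx
      exact ⟨σ, hσ, t, ht, hx⟩
    · rintro ⟨σ, hσ, t, ht, rfl⟩
      refine ⟨fun i => if i ∈ σ then t i else 0, ?_, ?_⟩
      · intro i; dsimp only; split_ifs with h
        · exact ht i
        · exact le_refl 0
      · have : ∑ i : ι, (if i ∈ σ then t i else 0) • v i = ∑ i ∈ σ, t i • v i := by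
          simp only [ite_smul, zero_smul]
          rw [Finset.sum_ite_mem Finset.univ σ (fun i => t i • v i), Finset.univ_inter]
        rw [this]
  rw [hrw]
  exact Set.Finite.isClosed_biUnion (Set.toFinite _) (fun σ hσ => isClosed_indep_part v σ hσ)

lemma farkas (v : ι → F) (ξ : F)
    (h : ∀ w, (∀ i, ⟪v i, w⟫ ≤ 0) → ⟪ξ, w⟫ ≤ 0) : ξ ∈ coneS v := by
  by_contra hξ
  obtain ⟨f, u, hfK, hfξ⟩ :=
    geometric_hahn_banach_closed_point (coneS_convex v) (coneS_isClosed v) hξ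
  set w := (InnerProductSpace.toDual ℝ F).symm f with hw
  have hfw : ∀ x, ⟪w, x⟫ = f x := fun x => by
    rw [hw, InnerProductSpace.toDual_symm_apply]
  have h0 : (0:ℝ) < u := by simpa using hfK 0 (zero_mem_coneS v)
  have hvw : ∀ i, ⟪v i, w⟫ ≤ 0 := by
    intro i
    by_contra hpos
    push_neg at hpos
    have hfv : 0 < f (v i) := by rw [← hfw]; rwa [real_inner_comm]
    have hmem := smul_mem_coneS v i (r := (u + 1) / f (v i)) (by positivity)
    have := hfK _ hmem
    rw [map_smul, smul_eq_mul, div_mul_cancel₀ _ hfv.ne'] at this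
    linarith
  have hh := h w hvw
  have : 0 < ⟪ξ, w⟫ := by rw [real_inner_comm, hfw]; linarith
  linarith

lemma farkas_sep (v : ι → F) (ξ : F) (hξ : ξ ∉ coneS v) :
    ∃ w, (∀ i, ⟪v i, w⟫ ≤ 0) ∧ 0 < ⟪ξ, w⟫ := by
  by_contra h
  push_neg at h
  exact hξ (farkas v ξ fun w hw => h w hw)

lemma coneS_subset_span (v : ι → F) :
    coneS v ⊆ (Submodule.span ℝ (Set.range v) : Set F) := by
  rintro x ⟨t, ht, rfl⟩
  exact Submodule.sum_mem _ fun i _ =>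
    Submodule.smul_mem _ _ (Submodule.subset_span ⟨i, rfl⟩)

lemma affineSpan_coneS (v : ι → F) :
    (affineSpan ℝ (coneS v) : Set F) = (Submodule.span ℝ (Set.range v) : Set F) := by
  rw [← Set.insert_eq_self.mpr (zero_mem_coneS v), affineSpan_insert_zero]
  have : Submodule.span ℝ (coneS v) = Submodule.span ℝ (Set.range v) := by
    refine le_antisymm (Submodule.span_le.mpr (coneS_subset_span v)) (Submodule.span_le.mpr ?_)
    rintro x ⟨i, rfl⟩
    exact Submodule.subset_span (by simpa using smul_mem_coneS v i (zero_le_one))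
  rw [this]

lemma coneS_pos_mem_intrinsicInterior (v : ι → F) (t : ι → ℝ) (ht : ∀ i, 0 < t i) :
    (∑ i, t i • v i) ∈ intrinsicInterior ℝ (coneS v) := by
  classical
  set W := Submodule.span ℝ (Set.range v) with hW
  set L : (ι → ℝ) →ₗ[ℝ] F := sumSmul v with hL
  have hLW : ∀ u : ι → ℝ, L u ∈ W := fun u => Submodule.sum_mem _
    (fun i _ => Submodule.smul_mem _ _ (Submodule.subset_span ⟨i, rfl⟩))
  set Lc : (ι → ℝ) →L[ℝ] W := LinearMap.toContinuousLinearMap (L.codRestrict W hLW) with hLc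
  have hsurj : Function.Surjective Lc := by
    rintro ⟨x, hx⟩
    obtain ⟨u, hu⟩ := (Submodule.mem_span_range_iff_exists_fun ℝ).mp hx
    exact ⟨u, Subtype.ext hu⟩
  have hopen : IsOpenMap Lc := Lc.isOpenMap hsurj
  have horth : IsOpen {u : ι → ℝ | ∀ i, 0 < u i} := by
    have : {u : ι → ℝ | ∀ i, 0 < u i} = ⋂ i, {u : ι → ℝ | 0 < u i} := by ext u; simp
    rw [this]
    exact isOpen_iInter_of_finite fun i =>
      isOpen_lt continuous_const (continuous_apply i)
  have hOsub : IsOpen (Lc '' {u : ι → ℝ | ∀ i, 0 < u i}) := hopen _ horth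
  obtain ⟨O, hOopen, hOpre⟩ := isOpen_induced_iff.mp hOsub
  set η : F := ∑ i, t i • v i with hη
  have hηW : η ∈ W := hLW t
  have hηimg : (⟨η, hηW⟩ : W) ∈ Lc '' {u : ι → ℝ | ∀ i, 0 < u i} :=
    ⟨t, ht, Subtype.ext rfl⟩
  have hηO : η ∈ O := by
    rw [← hOpre] at hηimg
    exact hηimg
  have hkey : ∀ y ∈ O, y ∈ (W : Set F) → y ∈ coneS v := by
    intro y hyO hyW
    have : (⟨y, hyW⟩ : W) ∈ Lc '' {u : ι → ℝ | ∀ i, 0 < u i} := by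
      rw [← hOpre]; exact hyO
    obtain ⟨u, hu, huy⟩ := this
    exact ⟨u, fun i => (hu i).le, (congrArg Subtype.val huy).symm⟩
  have hA : (affineSpan ℝ (coneS v) : Set F) = (W : Set F) := affineSpan_coneS v
  have hηA : η ∈ affineSpan ℝ (coneS v) := by
    have : η ∈ (affineSpan ℝ (coneS v) : Set F) := hA ▸ hηW
    exact this
  refine ⟨⟨η, hηA⟩, ?_, rfl⟩
  have hUopen : IsOpen ((Subtype.val : affineSpan ℝ (coneS v) → F) ⁻¹' O) :=
    continuous_subtype_val.isOpen_preimage _ hOopen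
  refine interior_maximal ?_ hUopen ?_
  · intro u hu
    have huW : (u : F) ∈ (W : Set F) := hA ▸ u.2
    exact hkey u hu huW
  · exact hηO

end FarkasSection

section GaleSection
variable {E' : Type*} [NormedAddCommGroup E'] [InnerProductSpace ℝ E'] [FiniteDimensional ℝ E']
variable {ι : Type*} [Fintype ι]

lemma gale (a : ι → E') (c : ι → ℝ) (hempty : {x : E' | ∀ i, ⟪a i, x⟫ ≤ c i} = ∅) :
    ∃ t : ι → ℝ, (∀ i, 0 ≤ t i) ∧ ∑ i, t i • a i = 0 ∧ ∑ i, t i * c i < 0 := by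
  classical
  set F : Type _ := WithLp 2 (E' × ℝ) with hF
  have : FiniteDimensional ℝ F := by unfold F; infer_instance
  set v : Option ι → F := fun o => Option.elim o (WithLp.toLp 2 ((0 : E'), (1 : ℝ))) (fun i => WithLp.toLp 2 (a i, c i)) with hv
  set ξ : F := WithLp.toLp 2 ((0 : E'), (-1 : ℝ)) with hξ
  have hcone : ξ ∈ coneS v := by
    apply farkas
    intro w hw
    have hwn : (⟪(0:E'), w.fst⟫ : ℝ) + (inner ℝ (1 : ℝ) w.snd : ℝ) ≤ 0 := by
      have := hw none
      rwa [WithLp.prod_inner_apply, show (WithLp.ofLp (v none)).fst = (0:E') from rfl,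
        show (WithLp.ofLp (v none)).snd = (1:ℝ) from rfl] at this
    have hws : ∀ i, (⟪a i, w.fst⟫ : ℝ) + c i * w.snd ≤ 0 := by
      intro i
      have := hw (some i)
      rwa [WithLp.prod_inner_apply, show (WithLp.ofLp (v (some i))).fst = a i from rfl,
        show (WithLp.ofLp (v (some i))).snd = c i from rfl, RCLike.inner_apply, conj_trivial, mul_comm] at this
    have hsnd : w.snd ≤ 0 := by
      rw [RCLike.inner_apply, conj_trivial, mul_one, inner_zero_left, zero_add] at hwn
      exact hwn
    show (⟪ξ, w⟫ : ℝ) ≤ 0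
    rw [WithLp.prod_inner_apply, show (WithLp.ofLp ξ).fst = (0:E') from rfl, show (WithLp.ofLp ξ).snd = (-1:ℝ) from rfl,
      RCLike.inner_apply, conj_trivial, inner_zero_left, zero_add]
    by_contra hlt
    push_neg at hlt
    have hsndlt : w.snd < 0 := by nlinarith [show w.snd = (WithLp.ofLp w).2 from rfl]
    have hmem : (-w.snd)⁻¹ • w.fst ∈ {x : E' | ∀ i, ⟪a i, x⟫ ≤ c i} := by
      intro i
      show (⟪a i, (-w.snd)⁻¹ • w.fst⟫ : ℝ) ≤ c i
      rw [real_inner_smul_right, inv_mul_le_iff₀ (by linarith)]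
      have := hws i
      nlinarith
    rw [hempty] at hmem
    exact hmem
  obtain ⟨t, ht, hsum⟩ := hcone
  rw [Fintype.sum_option] at hsum
  set π1 : F →ₗ[ℝ] E' := (LinearMap.fst ℝ E' ℝ).comp (WithLp.linearEquiv 2 ℝ (E' × ℝ)).toLinearMap
    with hπ1
  set π2 : F →ₗ[ℝ] ℝ := (LinearMap.snd ℝ E' ℝ).comp (WithLp.linearEquiv 2 ℝ (E' × ℝ)).toLinearMap
    with hπ2
  have h1 := congrArg π1 hsum
  have h2 := congrArg π2 hsum
  rw [map_add, map_smul, map_sum] at h1 h2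
  simp_rw [map_smul] at h1 h2
  rw [show π1 ξ = (0:E') from rfl, show π1 (v none) = (0:E') from rfl] at h1
  rw [show π2 ξ = (-1:ℝ) from rfl, show π2 (v none) = (1:ℝ) from rfl] at h2
  have h1' : ∑ i, t (some i) • a i = 0 := by
    have : ∀ i, π1 (v (some i)) = a i := fun i => rfl
    simp_rw [this] at h1
    rw [smul_zero, zero_add] at h1
    exact h1.symm
  have h2' : ∑ i, t (some i) * c i < 0 := by
    have : ∀ i, π2 (v (some i)) = c i := fun i => rfl
    simp_rw [this, smul_eq_mul] at h2
    have htn := ht none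
    nlinarith [h2]
  exact ⟨fun i => t (some i), fun i => ht (some i), h1', h2'⟩

lemma lp_attain (a : ι → E') (c : ι → ℝ) (hne : {x : E' | ∀ i, ⟪a i, x⟫ ≤ c i}.Nonempty)
    (ξ : E') (M : ℝ) (hM : ∀ x ∈ {x : E' | ∀ i, ⟪a i, x⟫ ≤ c i}, (⟪ξ, x⟫ : ℝ) ≤ M) :
    ∃ H ∈ {x : E' | ∀ i, ⟪a i, x⟫ ≤ c i},
      ∀ x ∈ {x : E' | ∀ i, ⟪a i, x⟫ ≤ c i}, (⟪ξ, x⟫ : ℝ) ≤ ⟪ξ, H⟫ := by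
  classical
  set S := {x : E' | ∀ i, ⟪a i, x⟫ ≤ c i} with hS
  set m : ℝ := sSup ((fun x => (⟪ξ, x⟫ : ℝ)) '' S) with hm
  have hbdd : BddAbove ((fun x => (⟪ξ, x⟫ : ℝ)) '' S) := by
    refine ⟨M, ?_⟩
    rintro y ⟨x, hx, rfl⟩
    exact hM x hx
  have himne : ((fun x => (⟪ξ, x⟫ : ℝ)) '' S).Nonempty := hne.image _
  have hle : ∀ x ∈ S, (⟪ξ, x⟫ : ℝ) ≤ m := fun x hx => le_csSup hbdd ⟨x, hx, rfl⟩
  set a' : Option ι → E' := fun o => Option.elim o (-ξ) a with ha'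
  set c' : Option ι → ℝ := fun o => Option.elim o (-m) c with hc'
  have hne' : {x : E' | ∀ i, ⟪a' i, x⟫ ≤ c' i}.Nonempty := by
    by_contra hempty
    rw [Set.not_nonempty_iff_eq_empty] at hempty
    obtain ⟨t, ht, hsum, hval⟩ := gale a' c' hempty
    rw [Fintype.sum_option] at hsum hval
    rw [show a' none = -ξ from rfl] at hsum
    rw [show c' none = -m from rfl] at hval
    simp_rw [show ∀ i, a' (some i) = a i from fun _ => rfl] at hsum
    simp_rw [show ∀ i, c' (some i) = c i from fun _ => rfl] at hval
    rcases eq_or_lt_of_le (ht none) with h0 | h0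
    · rw [← h0] at hsum hval
      rw [zero_smul, zero_add] at hsum
      rw [zero_mul, zero_add] at hval
      obtain ⟨x0, hx0⟩ := hne
      have : (0:ℝ) ≤ ∑ i, t (some i) * c i := by
        have h1 : (0:ℝ) = ∑ i, t (some i) * ⟪a i, x0⟫ := by
          have := congrArg (fun z => (⟪z, x0⟫ : ℝ)) hsum
          simpa [inner_zero_left, sum_inner, real_inner_smul_left] using this.symm
        rw [h1]
        refine Finset.sum_le_sum (fun i _ => ?_)
        have h2 : (⟪a i, x0⟫ : ℝ) ≤ c i := hx0 i
        exact mul_le_mul_of_nonneg_left h2 (ht (some i))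
      linarith
    · have hub : ∀ x ∈ S, (⟪ξ, x⟫ : ℝ) ≤ (∑ i, t (some i) * c i) / t none := by
        intro x hx
        rw [le_div_iff₀ h0]
        have h1 : t none * (⟪ξ, x⟫ : ℝ) = ∑ i, t (some i) * ⟪a i, x⟫ := by
          have h2 := congrArg (fun z => (⟪z, x⟫ : ℝ)) hsum
          simp only [inner_add_left, sum_inner, real_inner_smul_left, inner_neg_left,
            inner_zero_left, mul_neg] at h2
          linarith [h2]
        rw [mul_comm, h1]
        refine Finset.sum_le_sum (fun i _ => ?_)
        exact mul_le_mul_of_nonneg_left (hx i) (ht (some i))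
      have hmle : m ≤ (∑ i, t (some i) * c i) / t none := by
        apply csSup_le himne
        rintro y ⟨x, hx, rfl⟩
        exact hub x hx
      have h3 : m * t none ≤ ∑ i, t (some i) * c i := (le_div_iff₀ h0).mp hmle
      nlinarith
  obtain ⟨H, hH⟩ := hne'
  have hHS : H ∈ S := fun i => hH (some i)
  have hHm : m ≤ (⟪ξ, H⟫ : ℝ) := by
    have := hH none
    rw [show a' none = -ξ from rfl, show c' none = -m from rfl, inner_neg_left,
      neg_le_neg_iff] at this
    exact this
  exact ⟨H, hHS, fun x hx => le_trans (hle x hx) hHm⟩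

end GaleSection

section GeometrySection
variable {E : Type*} [NormedAddCommGroup E] [InnerProductSpace ℝ E] [FiniteDimensional ℝ E]

lemma extend_relint {s : Set E} {x y : E} (hx : x ∈ intrinsicInterior ℝ s) (hy : y ∈ s) :
    ∃ ε : ℝ, 0 < ε ∧ x + ε • (x - y) ∈ s := by
  obtain ⟨x', hx', hxx⟩ := hx
  have hxA : x ∈ affineSpan ℝ s := hxx ▸ x'.2
  have hyA : y ∈ affineSpan ℝ s := subset_affineSpan ℝ s hy
  have hmem : ∀ r : ℝ, x + r • (x - y) ∈ affineSpan ℝ s := by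
    intro r
    have := AffineSubspace.smul_vsub_vadd_mem (affineSpan ℝ s) r hxA hyA hxA
    simpa [vsub_eq_sub, vadd_eq_add, add_comm] using this
  set γ : ℝ → affineSpan ℝ s := fun r => ⟨x + r • (x - y), hmem r⟩ with hγ
  have hcont : Continuous γ := by
    apply Continuous.subtype_mk
    fun_prop
  have hγ0 : γ 0 = x' := Subtype.ext (by simp [hγ, hxx])
  have hopen : IsOpen (γ ⁻¹' interior ((Subtype.val) ⁻¹' s)) :=
    hcont.isOpen_preimage _ isOpen_interior
  have h0 : (0:ℝ) ∈ γ ⁻¹' interior ((Subtype.val) ⁻¹' s) := by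
    rw [Set.mem_preimage, hγ0]; exact hx'
  obtain ⟨ε, hε, hball⟩ := Metric.isOpen_iff.mp hopen 0 h0
  refine ⟨ε/2, by positivity, ?_⟩
  have hmemball : (ε/2 : ℝ) ∈ Metric.ball (0:ℝ) ε := by
    rw [Metric.mem_ball, Real.dist_eq, sub_zero, abs_of_pos (by positivity)]
    linarith
  have := interior_subset (hball hmemball)
  exact this

variable (s : Finset (E × ℝ))

/-- The set of constraints active at `H`. -/
noncomputable def act (H : E) : Finset (E × ℝ) :=
  s.filter (fun p => (inner ℝ p.1 H : ℝ) = p.2)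

/-- The family of active constraint vectors at `H`. -/
noncomputable def actV (H : E) : ↥(act s H) → E := fun p => (p : E × ℝ).1

lemma act_inner_eq {H : E} (p : ↥(act s H)) : (inner ℝ (p : E × ℝ).1 H : ℝ) = (p : E × ℝ).2 :=
  (Finset.mem_filter.mp p.2).2

lemma act_mem_s {H : E} (p : ↥(act s H)) : (p : E × ℝ) ∈ s :=
  (Finset.mem_filter.mp p.2).1

lemma halfspace_step {H w : E} (hH : H ∈ {x : E | ∀ p ∈ s, (inner ℝ p.1 x : ℝ) ≤ p.2})
    (hw : ∀ p ∈ s, (inner ℝ p.1 H : ℝ) = p.2 → (inner ℝ p.1 w : ℝ) ≤ 0) :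
    ∃ ε : ℝ, 0 < ε ∧ H + ε • w ∈ {x : E | ∀ p ∈ s, (inner ℝ p.1 x : ℝ) ≤ p.2} := by
  classical
  set δ : E × ℝ → ℝ := fun p => if (inner ℝ p.1 w : ℝ) ≤ 0 then 1 else (p.2 - ⟪p.1, H⟫) / ⟪p.1, w⟫
    with hδ
  set T : Finset ℝ := insert (1:ℝ) (s.image δ) with hT
  have hTne : T.Nonempty := ⟨1, Finset.mem_insert_self _ _⟩
  set ε : ℝ := T.min' hTne with hε
  have hδpos : ∀ p ∈ s, 0 < δ p := by
    intro p hp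
    rw [hδ]
    dsimp only
    split_ifs with h
    · exact zero_lt_one
    · push_neg at h
      have hlt : (inner ℝ p.1 H : ℝ) < p.2 := by
        rcases lt_or_eq_of_le (hH p hp) with h' | h'
        · exact h'
        · exact absurd (hw p hp h') (not_le.mpr h)
      exact div_pos (by linarith) h
  have hεpos : 0 < ε := by
    rw [hε, Finset.lt_min'_iff]
    intro b hb
    rw [hT, Finset.mem_insert] at hb
    rcases hb with rfl | hb
    · exact zero_lt_one
    · obtain ⟨p, hp, rfl⟩ := Finset.mem_image.mp hb
      exact hδpos p hp
  refine ⟨ε, hεpos, ?_⟩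
  intro p hp
  rw [inner_add_right, real_inner_smul_right]
  by_cases hpw : (inner ℝ p.1 w : ℝ) ≤ 0
  · have h1 : ε * ⟪p.1, w⟫ ≤ 0 := mul_nonpos_of_nonneg_of_nonpos hεpos.le hpw
    have h2 := hH p hp
    linarith
  · push_neg at hpw
    have hεle : ε ≤ δ p := Finset.min'_le T _ (by
      rw [hT, Finset.mem_insert]
      exact Or.inr (Finset.mem_image.mpr ⟨p, hp, rfl⟩))
    have hδval : δ p = (p.2 - ⟪p.1, H⟫) / ⟪p.1, w⟫ := by
      rw [hδ]; dsimp only; rw [if_neg (not_le.mpr hpw)]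
    rw [hδval] at hεle
    have := (le_div_iff₀ hpw).mp hεle
    linarith

lemma tangCone_of_active {C : Set E} (hsC : C = {x : E | ∀ p ∈ s, (inner ℝ p.1 x : ℝ) ≤ p.2})
    {H w : E} (hH : H ∈ C) (hw : ∀ p : ↥(act s H), (inner ℝ (p : E × ℝ).1 w : ℝ) ≤ 0) :
    w ∈ tangCone C H := by
  have hw' : ∀ p ∈ s, (inner ℝ p.1 H : ℝ) = p.2 → (inner ℝ p.1 w : ℝ) ≤ 0 := by
    intro p hp hact
    exact hw ⟨p, Finset.mem_filter.mpr ⟨hp, hact⟩⟩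
  rw [hsC] at hH
  obtain ⟨ε, hε, hmem⟩ := halfspace_step s hH hw'
  refine ⟨ε⁻¹, (inv_pos.mpr hε).le, H + ε • w, by rw [hsC]; exact hmem, ?_⟩
  rw [add_sub_cancel_left, smul_smul, inv_mul_cancel₀ hε.ne', one_smul]

lemma normCone_le_of_mem {C : Set E} {H y c : E} (hy : y ∈ normCone C H) (hc : c ∈ C) :
    (inner ℝ y (c - H) : ℝ) ≤ 0 :=
  hy _ ⟨1, zero_le_one, c, hc, (one_smul ℝ _).symm⟩

lemma normCone_eq_coneS {C : Set E} (hsC : C = {x : E | ∀ p ∈ s, (inner ℝ p.1 x : ℝ) ≤ p.2})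
    {H : E} (hH : H ∈ C) : normCone C H = coneS (actV s H) := by
  ext y
  constructor
  · intro hy
    apply farkas
    intro w hw
    exact hy w (tangCone_of_active s hsC hH hw)
  · rintro ⟨t, ht, rfl⟩
    rintro X ⟨r, hr, c, hc, rfl⟩
    rw [real_inner_smul_right, sum_inner]
    have hterm : ∀ p : ↥(act s H), (inner ℝ (t p • actV s H p) (c - H) : ℝ) ≤ 0 := by
      intro p
      rw [real_inner_smul_left, inner_sub_right]
      have h1 : (inner ℝ (actV s H p) c : ℝ) ≤ (p : E × ℝ).2 := by
        rw [hsC] at hc; exact hc _ (act_mem_s s p)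
      have h2 : (inner ℝ (actV s H p) H : ℝ) = (p : E × ℝ).2 := act_inner_eq s p
      have h3 : (inner ℝ (actV s H p) c : ℝ) - (inner ℝ (actV s H p) H : ℝ) ≤ 0 := by
        rw [h2]; linarith
      exact mul_nonpos_of_nonneg_of_nonpos (ht p) h3
    have hsum : ∑ p : ↥(act s H), (inner ℝ (t p • actV s H p) (c - H) : ℝ) ≤ 0 :=
      Finset.sum_nonpos (fun p _ => hterm p)
    exact mul_nonpos_of_nonneg_of_nonpos hr hsum

lemma factB {C : Set E} (hsC : C = {x : E | ∀ p ∈ s, (inner ℝ p.1 x : ℝ) ≤ p.2})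
    {η X : E} (hX : X ∈ C) (hmax : ∀ c ∈ C, (inner ℝ η c : ℝ) ≤ (inner ℝ η X : ℝ))
    (hrel : X ∈ intrinsicInterior ℝ {x | x ∈ C ∧ (inner ℝ η x : ℝ) = (inner ℝ η X : ℝ)}) :
    η ∈ intrinsicInterior ℝ (normCone C X) := by
  classical
  set v := actV s X with hv
  have hηN : η ∈ normCone C X := by
    rintro Z ⟨r, hr, c, hc, rfl⟩
    rw [real_inner_smul_right, inner_sub_right]
    have := hmax c hc
    exact mul_nonpos_of_nonneg_of_nonpos hr (by linarith)
  have hηrep : η ∈ coneS v := by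
    rw [← normCone_eq_coneS s hsC hX]
    exact hηN
  have claim : ∀ w : E, (∀ p : ↥(act s X), (inner ℝ (v p) w : ℝ) ≤ 0) →
      (inner ℝ η w : ℝ) = 0 → ∀ p : ↥(act s X), (inner ℝ (v p) w : ℝ) = 0 := by
    intro w hw hηw p
    have hw' : ∀ q ∈ s, (inner ℝ q.1 X : ℝ) = q.2 → (inner ℝ q.1 w : ℝ) ≤ 0 := by
      intro q hq hact
      exact hw ⟨q, Finset.mem_filter.mpr ⟨hq, hact⟩⟩
    obtain ⟨ε, hε, hmem⟩ := halfspace_step s (by rw [hsC] at hX; exact hX) hw'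
    have hG : X + ε • w ∈ {x | x ∈ C ∧ (inner ℝ η x : ℝ) = (inner ℝ η X : ℝ)} := by
      refine ⟨by rw [hsC]; exact hmem, ?_⟩
      rw [inner_add_right, real_inner_smul_right, hηw, mul_zero, add_zero]
    obtain ⟨ε', hε', hmem'⟩ := extend_relint hrel hG
    have hXc : X - (ε' * ε) • w ∈ C := by
      have h1 : X + ε' • (X - (X + ε • w)) = X - (ε' * ε) • w := by
        rw [sub_add_eq_sub_sub, sub_self, zero_sub, smul_neg, smul_smul]
        rw [← sub_eq_add_neg]
      rw [h1] at hmem'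
      exact hmem'.1
    have hple : (inner ℝ (p : E × ℝ).1 (X - (ε' * ε) • w) : ℝ) ≤ (p : E × ℝ).2 := by
      rw [hsC] at hXc
      exact hXc _ (act_mem_s s p)
    rw [inner_sub_right, real_inner_smul_right, act_inner_eq s p] at hple
    have hvp : (inner ℝ (v p) w : ℝ) = inner ℝ (p : E × ℝ).1 w := rfl
    have hge : 0 ≤ (inner ℝ (v p) w : ℝ) := by
      rw [hvp]
      have hpos : 0 < ε' * ε := mul_pos hε' hε
      nlinarith
    exact le_antisymm (hw p) hge
  have star : ∀ j : ↥(act s X), ∃ t : ↥(act s X) → ℝ,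
      (∀ p, 0 ≤ t p) ∧ η = ∑ p, t p • v p ∧ 0 < t j := by
    intro j
    by_contra h'
    push_neg at h'
    have hna : -(v j) ∉ coneS (fun o : Option ↥(act s X) => Option.elim o (-η) v) := by
      rintro ⟨t, ht, hrep⟩
      rw [Fintype.sum_option] at hrep
      simp only [Option.elim_none, Option.elim_some] at hrep
      obtain ⟨t0, ht0, hrep0⟩ := hηrep
      rcases eq_or_lt_of_le (ht none) with h0 | h0
      · rw [← h0, zero_smul, zero_add] at hrep
        set u : ↥(act s X) → ℝ := fun p => t0 p + t (some p) + (if p = j then 1 else 0) with hu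
        have hunn : ∀ p, 0 ≤ u p := by
          intro p
          rw [hu]
          dsimp only
          have := ht0 p
          have := ht (some p)
          split_ifs <;> linarith
        have hueq : η = ∑ p, u p • v p := by
          rw [hu]
          simp only [add_smul, ite_smul, one_smul, zero_smul, Finset.sum_add_distrib]
          rw [Finset.sum_ite_eq' Finset.univ j (fun p => v p)]
          simp only [Finset.mem_univ, if_true]
          rw [← hrep0, ← hrep]
          abel
        have := h' u hunn hueq
        rw [hu] at this
        dsimp only at this
        rw [if_pos rfl] at this
        linarith [ht0 j, ht (some j)]
      · set r := t none with hr
        have hrη : r • η = v j + ∑ p, t (some p) • v p := by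
          have h := hrep
          rw [smul_neg, ← sub_eq_zero] at h
          rw [← sub_eq_zero]
          calc r • η - (v j + ∑ p, t (some p) • v p)
              = -(v j) - (-(r • η) + ∑ p, t (some p) • v p) := by abel
            _ = 0 := h
        set u : ↥(act s X) → ℝ :=
          fun p => r⁻¹ * (t (some p) + if p = j then 1 else 0) with hu
        have hunn : ∀ p, 0 ≤ u p := by
          intro p
          rw [hu]
          dsimp only
          have h1 := ht (some p)
          have h2 : 0 ≤ r⁻¹ := inv_nonneg.mpr (ht none)
          split_ifs <;> positivity
        have hueq : η = ∑ p, u p • v p := by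
          rw [hu]
          simp only [mul_smul, ← Finset.smul_sum]
          have hin : ∑ p, (t (some p) + if p = j then 1 else 0) • v p
              = ∑ p, t (some p) • v p + v j := by
            simp only [add_smul, ite_smul, one_smul, zero_smul, Finset.sum_add_distrib]
            rw [Finset.sum_ite_eq' Finset.univ j (fun p => v p)]
            simp
          rw [hin, show ∑ p, t (some p) • v p + v j = r • η from by rw [hrη]; abel,
            smul_smul, inv_mul_cancel₀ h0.ne', one_smul]
        have := h' u hunn hueq
        rw [hu] at this
        dsimp only at this
        rw [if_pos rfl] at this
        have h1 := ht (some j)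
        have h2 : 0 < r⁻¹ := inv_pos.mpr h0
        nlinarith
    obtain ⟨w, hw, hwj⟩ := farkas_sep _ _ hna
    have hwv : ∀ p : ↥(act s X), (inner ℝ (v p) w : ℝ) ≤ 0 := fun p => hw (some p)
    have hwη : (inner ℝ η w : ℝ) = 0 := by
      have h1 : (inner ℝ (-η) w : ℝ) ≤ 0 := hw none
      rw [inner_neg_left] at h1
      obtain ⟨t0, ht0, hrep0⟩ := hηrep
      have h2 : (inner ℝ η w : ℝ) ≤ 0 := by
        rw [hrep0, sum_inner]
        apply Finset.sum_nonpos
        intro p _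
        rw [real_inner_smul_left]
        exact mul_nonpos_of_nonneg_of_nonpos (ht0 p) (hwv p)
      linarith
    have := claim w hwv hwη j
    rw [inner_neg_left] at hwj
    linarith
  rcases isEmpty_or_nonempty ↥(act s X) with hA | hA
  · obtain ⟨t0, ht0, hrep0⟩ := hηrep
    rw [Finset.univ_eq_empty, Finset.sum_empty] at hrep0
    have hzero : η = ∑ p : ↥(act s X), (1:ℝ) • v p := by
      rw [Finset.univ_eq_empty, Finset.sum_empty, hrep0]
    rw [normCone_eq_coneS s hsC hX, hzero]
    exact coneS_pos_mem_intrinsicInterior v _ (fun p => zero_lt_one)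
  · choose T hT0 hTrep hTpos using star
    set n : ℝ := (Fintype.card ↥(act s X) : ℝ) with hn
    have hnpos : 0 < n := by
      rw [hn]
      exact_mod_cast Fintype.card_pos
    set u : ↥(act s X) → ℝ := fun p => (∑ j, T j p) / n with hu
    have hupos : ∀ p, 0 < u p := by
      intro p
      rw [hu]
      apply div_pos _ hnpos
      have h1 : T p p ≤ ∑ j, T j p :=
        Finset.single_le_sum (f := fun j => T j p) (fun j _ => hT0 j p) (Finset.mem_univ p)
      linarith [hTpos p]
    have hueq : η = ∑ p, u p • v p := by
      rw [hu]
      simp only [div_eq_inv_mul, mul_smul, ← Finset.smul_sum]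
      rw [show ∑ p, (∑ j, T j p) • v p = ∑ p, ∑ j, T j p • v p by
        exact Finset.sum_congr rfl fun p _ => Finset.sum_smul]
      rw [Finset.sum_comm]
      have hTj : ∀ j : ↥(act s X), ∑ p, T j p • v p = η := fun j => (hTrep j).symm
      rw [Finset.sum_congr rfl (fun j _ => hTj j), Finset.sum_const, Finset.card_univ]
      rw [show (Fintype.card ↥(act s X)) • η = n • η from by
        rw [hn]; exact (Nat.cast_smul_eq_nsmul ℝ _ _).symm]
      rw [smul_smul, inv_mul_cancel₀ hnpos.ne', one_smul]
    rw [normCone_eq_coneS s hsC hX, hueq]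
    exact coneS_pos_mem_intrinsicInterior v u hupos

lemma projOn_sub (b' : Submodule ℝ E) (x y : E) :
    projOn b' (x - y) = projOn b' x - projOn b' y := by
  simp [projOn, map_sub]

lemma mem_asympCone_of {C : Set E} (hsC : C = {x : E | ∀ p ∈ s, (inner ℝ p.1 x : ℝ) ≤ p.2})
    {w : E} (hw : ∀ p ∈ s, (inner ℝ p.1 w : ℝ) ≤ 0) : w ∈ asympCone C := by
  show C + {Y | ∃ t : ℝ, 0 ≤ t ∧ Y = t • w} = C
  ext z
  constructor
  · intro hz
    rw [Set.mem_add] at hz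
    obtain ⟨c, hc, yy, ⟨t, ht, rfl⟩, rfl⟩ := hz
    rw [hsC] at hc ⊢
    intro p hp
    rw [inner_add_right, real_inner_smul_right]
    have h1 := hc p hp
    have h2 := hw p hp
    nlinarith
  · intro hz
    rw [Set.mem_add]
    exact ⟨z, hz, 0 • w, ⟨0, le_refl 0, rfl⟩, by rw [zero_smul, add_zero]⟩

end GeometrySection

theorem stmt_7 (C : Set E) (hC : IsFGConvex C) (hne : C.Nonempty)
    (b : Submodule ℝ E)
    (hdim : Module.finrank ℝ
        (Submodule.span ℝ (polarCone (asympCone C) + (b : Set E))) = Module.finrank ℝ E)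
    (ξ : E) (hξb : ξ ∈ bᗮ)
    (hξ : ξ ∈ projOn bᗮ '' polarCone (asympCone C))
    (hgen : ∀ F : Set E, IsFace C F →
      Module.finrank ℝ (Submodule.span ℝ (projOn bᗮ '' aFplus C F)) < Module.finrank ℝ bᗮ →
      ξ ∉ projOn bᗮ '' aFplus C F) :
    Set.BijOn (projOn b)
      (⋃ F ∈ {F : Set E | IsFace C F ∧ ξ ∈ projOn bᗮ '' aFplus C F}, F)
      (projOn b '' C) := by
  classical
  obtain ⟨s, hsC⟩ := hC
  have Csub : ∀ {Fc : Set E}, IsFace C Fc → Fc ⊆ C := by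
    rintro Fc ⟨hne', lam, cc, hsupp, hFeq⟩ x hx
    rw [hFeq] at hx
    exact hx.1
  have Cconv : Convex ℝ C := by
    rw [hsC]
    intro x hx y hy a b' ha hb hab p hp
    rw [inner_add_right, real_inner_smul_right, real_inner_smul_right]
    have h1 := hx p hp
    have h2 := hy p hp
    calc a * (inner ℝ p.1 x : ℝ) + b' * (inner ℝ p.1 y : ℝ)
        ≤ a * p.2 + b' * p.2 :=
          add_le_add (mul_le_mul_of_nonneg_left h1 ha) (mul_le_mul_of_nonneg_left h2 hb)
      _ = p.2 := by rw [← add_mul, hab, one_mul]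
  -- orthogonal projection helpers
  have Qmem : ∀ x : E, projOn bᗮ x ∈ bᗮ := fun x => SetLike.coe_mem _
  have Qself : ∀ {w : E}, w ∈ bᗮ → projOn bᗮ w = w := fun hw =>
    Submodule.starProjection_eq_self_iff.mpr hw
  have Qzero : ∀ {w : E}, w ∈ b → projOn bᗮ w = 0 := by
    intro w hw
    show (bᗮ.orthogonalProjection w : E) = 0
    rw [Submodule.orthogonalProjectionOnto_apply_of_mem_orthogonal
      (Submodule.le_orthogonal_orthogonal b hw)]
    rfl
  have Qinner : ∀ (η : E) {w : E}, w ∈ bᗮ → (inner ℝ (projOn bᗮ η) w : ℝ) = inner ℝ η w := by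
    intro η w hw
    show (inner ℝ (bᗮ.starProjection η) w : ℝ) = inner ℝ η w
    rw [Submodule.inner_starProjection_left_eq_right]
    rw [show bᗮ.starProjection w = projOn bᗮ w from rfl, Qself hw]
  have Pdiff : ∀ {x y : E}, projOn b x = projOn b y → y - x ∈ bᗮ := by
    intro x y h
    have h1 : b.orthogonalProjection (y - x) = 0 := by
      rw [map_sub, sub_eq_zero]
      exact Subtype.coe_injective h.symm
    exact Submodule.orthogonalProjectionOnto_eq_zero_iff.mp h1
  have faceval : ∀ {Fc : Set E} {η X H : E}, Fc ⊆ C →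
      (∀ c ∈ C, (inner ℝ η c : ℝ) ≤ inner ℝ η X) →
      X ∈ intrinsicInterior ℝ Fc → H ∈ Fc → (inner ℝ η H : ℝ) = inner ℝ η X := by
    intro Fc η X H hFC hmax hX hH
    obtain ⟨ε, hε, hmem⟩ := extend_relint hX hH
    have h1 := hmax _ (hFC hmem)
    have h2 := hmax _ (hFC hH)
    rw [inner_add_right, real_inner_smul_right, inner_sub_right] at h1
    nlinarith
  have nmax : ∀ {η X : E}, η ∈ normCone C X → ∀ c ∈ C, (inner ℝ η c : ℝ) ≤ inner ℝ η X := by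
    intro η X hη c hc
    have := normCone_le_of_mem hη hc
    rw [inner_sub_right] at this
    linarith
  -- construction of the face attached to a supporting functional
  have faceC : ∀ {η X0 : E}, X0 ∈ C → (∀ c ∈ C, (inner ℝ η c : ℝ) ≤ inner ℝ η X0) →
      IsFace C {x | x ∈ C ∧ (inner ℝ η x : ℝ) = inner ℝ η X0} ∧
      η ∈ aFplus C {x | x ∈ C ∧ (inner ℝ η x : ℝ) = inner ℝ η X0} := by
    intro η X0 hX0 hmax
    set G := {x | x ∈ C ∧ (inner ℝ η x : ℝ) = inner ℝ η X0} with hG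
    have hface : IsFace C G := ⟨⟨X0, hX0, rfl⟩, η, inner ℝ η X0, hmax, rfl⟩
    have hGconv : Convex ℝ G := by
      intro x hx y hy a b' ha hb hab
      refine ⟨Cconv hx.1 hy.1 ha hb hab, ?_⟩
      rw [inner_add_right, real_inner_smul_right, real_inner_smul_right, hx.2, hy.2]
      have : a * (inner ℝ η X0 : ℝ) + b' * inner ℝ η X0 = (a + b') * inner ℝ η X0 := by ring
      rw [this, hab, one_mul]
    obtain ⟨Z, hZ⟩ := (intrinsicInterior_nonempty hGconv).mpr ⟨X0, hX0, rfl⟩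
    have hZG : Z ∈ G := intrinsicInterior_subset hZ
    have hmaxZ : ∀ c ∈ C, (inner ℝ η c : ℝ) ≤ inner ℝ η Z := by
      intro c hc; rw [hZG.2]; exact hmax c hc
    have hGZ : G = {x | x ∈ C ∧ (inner ℝ η x : ℝ) = inner ℝ η Z} := by
      ext x
      simp only [hG, Set.mem_setOf_eq, hZG.2]
    have hrelZ : Z ∈ intrinsicInterior ℝ {x | x ∈ C ∧ (inner ℝ η x : ℝ) = inner ℝ η Z} := by
      rw [← hGZ]; exact hZ
    have hfb := factB s hsC hZG.1 hmaxZ hrelZ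
    exact ⟨hface, Set.mem_biUnion hZ hfb⟩
  have hUsubC : (⋃ F ∈ {F : Set E | IsFace C F ∧ ξ ∈ projOn bᗮ '' aFplus C F}, F) ⊆ C := by
    intro x hx
    simp only [Set.mem_iUnion, Set.mem_setOf_eq, exists_prop] at hx
    obtain ⟨Fc, ⟨hface, _⟩, hxF⟩ := hx
    exact Csub hface hxF
  refine ⟨fun x hx => Set.mem_image_of_mem _ (hUsubC hx), ?_, ?_⟩
  · -- injectivity
    intro H1 h1 H2 h2 hP
    simp only [Set.mem_iUnion, Set.mem_setOf_eq, exists_prop] at h1 h2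
    obtain ⟨F1, ⟨hf1, hξ1⟩, hH1F⟩ := h1
    obtain ⟨F2, ⟨hf2, hξ2⟩, hH2F⟩ := h2
    obtain ⟨η1, hη1a, hQ1⟩ := hξ1
    obtain ⟨η2, hη2a, hQ2⟩ := hξ2
    simp only [aFplus, Set.mem_iUnion, exists_prop] at hη1a hη2a
    obtain ⟨X1, hX1rel, hη1rel⟩ := hη1a
    obtain ⟨X2, hX2rel, hη2rel⟩ := hη2a
    have hη1N : η1 ∈ normCone C X1 := intrinsicInterior_subset hη1rel
    have hη2N : η2 ∈ normCone C X2 := intrinsicInterior_subset hη2rel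
    have hmax1 := nmax hη1N
    have hmax2 := nmax hη2N
    have hH1C : H1 ∈ C := Csub hf1 hH1F
    have hH2C : H2 ∈ C := Csub hf2 hH2F
    have hX1C : X1 ∈ C := Csub hf1 (intrinsicInterior_subset hX1rel)
    have hv : H2 - H1 ∈ bᗮ := Pdiff hP
    have e1 : (inner ℝ η1 H1 : ℝ) = inner ℝ η1 X1 := faceval (Csub hf1) hmax1 hX1rel hH1F
    have e2 : (inner ℝ η2 H2 : ℝ) = inner ℝ η2 X2 := faceval (Csub hf2) hmax2 hX2rel hH2F
    have d1 : (inner ℝ ξ (H2 - H1) : ℝ) ≤ 0 := by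
      rw [← hQ1, Qinner η1 hv, inner_sub_right]
      have := hmax1 H2 hH2C
      linarith [e1]
    have d2 : (inner ℝ ξ (H1 - H2) : ℝ) ≤ 0 := by
      have hv' : H1 - H2 ∈ bᗮ := by
        have := bᗮ.neg_mem hv
        rwa [neg_sub] at this
      rw [← hQ2, Qinner η2 hv', inner_sub_right]
      have := hmax2 H1 hH1C
      linarith [e2]
    have dd : (inner ℝ ξ (H2 - H1) : ℝ) = 0 := by
      have h3 : (inner ℝ ξ (H1 - H2) : ℝ) = -(inner ℝ ξ (H2 - H1) : ℝ) := by
        rw [← inner_neg_right, neg_sub]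
      linarith
    have e12 : (inner ℝ η1 H2 : ℝ) = inner ℝ η1 X1 := by
      have h3 : (inner ℝ η1 (H2 - H1) : ℝ) = 0 := by
        rw [← Qinner η1 hv, hQ1]
        exact dd
      rw [inner_sub_right] at h3
      linarith [e1]
    by_contra hne12
    have hvne : H2 - H1 ≠ 0 := sub_ne_zero.mpr (fun h => hne12 h.symm)
    obtain ⟨hGface, hηmem⟩ := faceC hX1C hmax1
    have hH1G : H1 ∈ {x | x ∈ C ∧ (inner ℝ η1 x : ℝ) = inner ℝ η1 X1} := ⟨hH1C, e1⟩
    have hH2G : H2 ∈ {x | x ∈ C ∧ (inner ℝ η1 x : ℝ) = inner ℝ η1 X1} := ⟨hH2C, e12⟩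
    have hξG : ξ ∈ projOn bᗮ '' aFplus C {x | x ∈ C ∧ (inner ℝ η1 x : ℝ) = inner ℝ η1 X1} :=
      ⟨η1, hηmem, hQ1⟩
    set W := bᗮ ⊓ (Submodule.span ℝ {H2 - H1})ᗮ with hWdef
    have hsub : projOn bᗮ '' aFplus C {x | x ∈ C ∧ (inner ℝ η1 x : ℝ) = inner ℝ η1 X1}
        ⊆ (W : Set E) := by
      rintro y ⟨η', hη', rfl⟩
      simp only [aFplus, Set.mem_iUnion, exists_prop] at hη'
      obtain ⟨X'', hX''rel, hη'rel⟩ := hη'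
      have hη'N : η' ∈ normCone C X'' := intrinsicInterior_subset hη'rel
      have hmax' := nmax hη'N
      have hGC : {x | x ∈ C ∧ (inner ℝ η1 x : ℝ) = inner ℝ η1 X1} ⊆ C := fun x hx => hx.1
      have hinner0 : (inner ℝ η' (H2 - H1) : ℝ) = 0 := by
        have g1 := faceval hGC hmax' hX''rel hH1G
        have g2 := faceval hGC hmax' hX''rel hH2G
        rw [inner_sub_right]
        linarith
      show projOn bᗮ η' ∈ W
      rw [Submodule.mem_inf]
      refine ⟨Qmem η', ?_⟩
      rw [Submodule.mem_orthogonal]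
      intro u hu
      obtain ⟨r, rfl⟩ := Submodule.mem_span_singleton.mp hu
      rw [real_inner_smul_left, real_inner_comm, Qinner η' hv, hinner0, mul_zero]
    have hle : Submodule.span ℝ
        (projOn bᗮ '' aFplus C {x | x ∈ C ∧ (inner ℝ η1 x : ℝ) = inner ℝ η1 X1}) ≤ W :=
      Submodule.span_le.mpr hsub
    have hWlt : W < bᗮ := by
      refine lt_of_le_of_ne inf_le_left (fun hWeq => ?_)
      have hvW : H2 - H1 ∈ W := by rw [hWeq]; exact hv
      rw [Submodule.mem_inf, Submodule.mem_orthogonal] at hvW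
      have := hvW.2 (H2 - H1) (Submodule.mem_span_singleton_self _)
      rw [real_inner_self_eq_norm_sq] at this
      have : ‖H2 - H1‖ = 0 := by nlinarith [norm_nonneg (H2 - H1)]
      exact hvne (norm_eq_zero.mp this)
    have hlt2 : Module.finrank ℝ (Submodule.span ℝ
        (projOn bᗮ '' aFplus C {x | x ∈ C ∧ (inner ℝ η1 x : ℝ) = inner ℝ η1 X1}))
        < Module.finrank ℝ bᗮ :=
      lt_of_le_of_lt (Submodule.finrank_mono hle) (Submodule.finrank_lt_finrank_of_lt hWlt)
    exact absurd hξG (hgen _ hGface hlt2)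
  · -- surjectivity
    rintro y ⟨H0, hH0C, rfl⟩
    -- a basis of b
    set rk := Module.finrank ℝ ↥b with hrk
    set B := Module.finBasis ℝ ↥b with hB
    set d : Fin rk → E := fun k => (B k : E) with hd
    have hdb : ∀ k, d k ∈ b := fun k => (B k).2
    have hbspan : Submodule.span ℝ (Set.range d) = b := by
      have h1 : Set.range d = (b.subtype) '' Set.range B := by
        ext u
        constructor
        · rintro ⟨k, rfl⟩; exact ⟨B k, ⟨k, rfl⟩, rfl⟩
        · rintro ⟨v, ⟨k, rfl⟩, rfl⟩; exact ⟨k, rfl⟩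
      rw [h1, Submodule.span_image, B.span_eq, Submodule.map_subtype_top]
    have hbperp : ∀ z : E, z ∈ bᗮ ↔ ∀ k, (inner ℝ (d k) z : ℝ) = 0 := by
      intro z
      constructor
      · intro hz k
        exact (Submodule.mem_orthogonal b z).mp hz (d k) (hdb k)
      · intro h
        rw [Submodule.mem_orthogonal]
        intro u hu
        rw [← hbspan] at hu
        induction hu using Submodule.span_induction with
        | mem u hu => obtain ⟨k, rfl⟩ := hu; exact h k
        | zero => rw [inner_zero_left]
        | add u v _ _ hu hv => rw [inner_add_left, hu, hv, add_zero]
        | smul r u _ hu => rw [real_inner_smul_left, hu, mul_zero]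
    have hPfib : ∀ z : E, projOn b z = projOn b H0 ↔
        ∀ k, (inner ℝ (d k) z : ℝ) = inner ℝ (d k) H0 := by
      intro z
      constructor
      · intro h k
        have h1 := Pdiff h
        have h2 := (hbperp (H0 - z)).mp h1 k
        rw [inner_sub_right] at h2
        linarith
      · intro h
        have hz : z - H0 ∈ bᗮ := (hbperp _).mpr
          (fun k => by rw [inner_sub_right, h k, sub_self])
        have h1 : b.orthogonalProjection (z - H0) = 0 :=
          Submodule.orthogonalProjectionOnto_eq_zero_iff.mpr hz
        rw [map_sub, sub_eq_zero] at h1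
        exact congrArg Subtype.val h1
    -- the fiber as a polyhedron
    set af : (↥s ⊕ (Fin rk ⊕ Fin rk)) → E :=
      Sum.elim (fun p : ↥s => (p : E × ℝ).1) (Sum.elim d (fun k => -d k)) with haf
    set cf : (↥s ⊕ (Fin rk ⊕ Fin rk)) → ℝ :=
      Sum.elim (fun p : ↥s => (p : E × ℝ).2)
        (Sum.elim (fun k => (inner ℝ (d k) H0 : ℝ)) (fun k => -(inner ℝ (d k) H0 : ℝ))) with hcf
    have hSfib : ∀ z : E, (∀ i, (inner ℝ (af i) z : ℝ) ≤ cf i) ↔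
        (z ∈ C ∧ projOn b z = projOn b H0) := by
      intro z
      constructor
      · intro h
        constructor
        · rw [hsC]
          intro p hp
          exact h (Sum.inl ⟨p, hp⟩)
        · rw [hPfib]
          intro k
          have h1 := h (Sum.inr (Sum.inl k))
          have h2 := h (Sum.inr (Sum.inr k))
          rw [show af (Sum.inr (Sum.inl k)) = d k from rfl,
            show cf (Sum.inr (Sum.inl k)) = (inner ℝ (d k) H0 : ℝ) from rfl] at h1
          rw [show af (Sum.inr (Sum.inr k)) = -(d k) from rfl,
            show cf (Sum.inr (Sum.inr k)) = -(inner ℝ (d k) H0 : ℝ) from rfl,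
            inner_neg_left] at h2
          linarith
      · rintro ⟨hzC, hzP⟩ i
        rcases i with p | k | k
        · show (inner ℝ (p : E × ℝ).1 z : ℝ) ≤ (p : E × ℝ).2
          rw [hsC] at hzC
          exact hzC _ p.2
        · show (inner ℝ (d k) z : ℝ) ≤ (inner ℝ (d k) H0 : ℝ)
          exact le_of_eq ((hPfib z).mp hzP k)
        · show (inner ℝ (-(d k)) z : ℝ) ≤ -(inner ℝ (d k) H0 : ℝ)
          rw [inner_neg_left]
          have := (hPfib z).mp hzP k
          linarith
    obtain ⟨η0, hη0pol, hQη0⟩ := hξ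
    have hyprec : ∀ w : E, (∀ i, (inner ℝ (af i) w : ℝ) ≤ 0) → (inner ℝ ξ w : ℝ) ≤ 0 := by
      intro w hw
      have hwperp : w ∈ bᗮ := (hbperp w).mpr (fun k => by
        have h1 := hw (Sum.inr (Sum.inl k))
        have h2 := hw (Sum.inr (Sum.inr k))
        rw [show af (Sum.inr (Sum.inr k)) = -(d k) from rfl, inner_neg_left] at h2
        rw [show af (Sum.inr (Sum.inl k)) = d k from rfl] at h1
        linarith)
      have hwasymp : w ∈ asympCone C :=
        mem_asympCone_of s hsC (fun p hp => hw (Sum.inl ⟨p, hp⟩))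
      have h3 : (inner ℝ η0 w : ℝ) ≤ 0 := hη0pol w hwasymp
      rw [← hQη0, Qinner η0 hwperp]
      exact h3
    obtain ⟨t, ht, hrept⟩ := farkas af ξ hyprec
    have hbound : ∀ z ∈ {x : E | ∀ i, (inner ℝ (af i) x : ℝ) ≤ cf i},
        (inner ℝ ξ z : ℝ) ≤ ∑ i, t i * cf i := by
      intro z hz
      rw [hrept, sum_inner]
      refine Finset.sum_le_sum (fun i _ => ?_)
      rw [real_inner_smul_left]
      exact mul_le_mul_of_nonneg_left (hz i) (ht i)
    have hfne : {x : E | ∀ i, (inner ℝ (af i) x : ℝ) ≤ cf i}.Nonempty :=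
      ⟨H0, (hSfib H0).mpr ⟨hH0C, rfl⟩⟩
    obtain ⟨H, hHS, hHmax⟩ := lp_attain af cf hfne ξ _ hbound
    have hHC : H ∈ C := ((hSfib H).mp hHS).1
    have hHP : projOn b H = projOn b H0 := ((hSfib H).mp hHS).2
    -- a supporting functional at H projecting to ξ
    set ag : (↥(act s H) ⊕ (Fin rk ⊕ Fin rk)) → E :=
      Sum.elim (actV s H) (Sum.elim d (fun k => -d k)) with hag
    have hyp2 : ∀ w : E, (∀ i, (inner ℝ (ag i) w : ℝ) ≤ 0) → (inner ℝ ξ w : ℝ) ≤ 0 := by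
      intro w hw
      have hwperp : w ∈ bᗮ := (hbperp w).mpr (fun k => by
        have h1 := hw (Sum.inr (Sum.inl k))
        have h2 := hw (Sum.inr (Sum.inr k))
        rw [show ag (Sum.inr (Sum.inr k)) = -(d k) from rfl, inner_neg_left] at h2
        rw [show ag (Sum.inr (Sum.inl k)) = d k from rfl] at h1
        linarith)
      have hstep : ∀ q ∈ s, (inner ℝ q.1 H : ℝ) = q.2 → (inner ℝ q.1 w : ℝ) ≤ 0 := fun q hq hact =>
        hw (Sum.inl ⟨q, Finset.mem_filter.mpr ⟨hq, hact⟩⟩)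
      obtain ⟨ε, hε, hmem⟩ := halfspace_step s (by rw [hsC] at hHC; exact hHC) hstep
      have hmemS : H + ε • w ∈ {x : E | ∀ i, (inner ℝ (af i) x : ℝ) ≤ cf i} := by
        rw [Set.mem_setOf_eq, hSfib]
        refine ⟨by rw [hsC]; exact hmem, ?_⟩
        have hPP : b.orthogonalProjection (H + ε • w) = b.orthogonalProjection H := by
          rw [map_add, map_smul]
          have hw0 : b.orthogonalProjection w = 0 :=
            Submodule.orthogonalProjectionOnto_eq_zero_iff.mpr hwperp
          rw [hw0, smul_zero, add_zero]
        show (b.orthogonalProjection (H + ε • w) : E) = projOn b H0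
        rw [hPP]
        exact hHP
      have := hHmax _ hmemS
      rw [inner_add_right, real_inner_smul_right] at this
      nlinarith
    obtain ⟨u, hu, hrepu⟩ := farkas ag ξ hyp2
    simp only [Fintype.sum_sum_type] at hrepu
    simp only [hag, Sum.elim_inl, Sum.elim_inr] at hrepu
    set η : E := ∑ p : ↥(act s H), u (Sum.inl p) • actV s H p with hη
    set β : E := (∑ k : Fin rk, u (Sum.inr (Sum.inl k)) • d k)
      + ∑ k : Fin rk, u (Sum.inr (Sum.inr k)) • (-(d k)) with hβ
    have hξηβ : ξ = η + β := by
      rw [hrepu]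
    have hβb : β ∈ b := Submodule.add_mem _
      (Submodule.sum_mem _ fun k _ => Submodule.smul_mem _ _ (hdb k))
      (Submodule.sum_mem _ fun k _ => Submodule.smul_mem _ _ (Submodule.neg_mem _ (hdb k)))
    have hQη : projOn bᗮ η = ξ := by
      have h1 : η = ξ - β := by rw [hξηβ]; abel
      rw [h1, projOn_sub, Qself hξb, Qzero hβb, sub_zero]
    have hmaxη : ∀ c ∈ C, (inner ℝ η c : ℝ) ≤ inner ℝ η H := by
      intro c hc
      rw [hη, sum_inner, sum_inner]
      refine Finset.sum_le_sum (fun p _ => ?_)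
      rw [real_inner_smul_left, real_inner_smul_left]
      apply mul_le_mul_of_nonneg_left _ (hu (Sum.inl p))
      have h1 : (inner ℝ (actV s H p) c : ℝ) ≤ (p : E × ℝ).2 := by
        rw [hsC] at hc
        exact hc _ (act_mem_s s p)
      have h2 : (inner ℝ (actV s H p) H : ℝ) = (p : E × ℝ).2 := act_inner_eq s p
      rw [show (inner ℝ (actV s H p) H : ℝ) = (p : E × ℝ).2 from h2]
      exact h1
    obtain ⟨hGface, hηmem⟩ := faceC hHC hmaxη
    refine ⟨H, ?_, hHP⟩
    simp only [Set.mem_iUnion, Set.mem_setOf_eq, exists_prop]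
    exact ⟨_, ⟨hGface, ⟨η, hηmem, hQη⟩⟩, ⟨hHC, rfl⟩⟩
end

section
/- Let 𝒞 ⊆ 𝔞 be a nonempty finitely generated convex set with asymptotic cone C, and let 𝔟 ⊆ 𝔞 be a linear subspace such that dim(C∨ + 𝔟) = dim 𝔞. Let ξ ∈ 𝔟⊥ be such that ξ ∈ p⊥(C∨), and assume ξ is in general position in the following sense: for every face F of 𝒞 such that the dimension of the linear span of p⊥(𝔞_F^+) is strictly smaller than dim 𝔟⊥, one has ξ ∉ p⊥(𝔞_F^+). Then for every pair of faces F₁, F₂ ∈ ℱ(𝒞,ξ), one has p(F₁) ∩ p(F₂) = p(F₁ ∩ F₂). -/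
open Pointwise

variable {E : Type*} [NormedAddCommGroup E] [InnerProductSpace ℝ E] [FiniteDimensional ℝ E]

/-- From a relative interior point `x` of `S`, one can move slightly past `x` away from any
point `y ∈ S` and stay in `S`. -/
lemma relint_extend {S : Set E} {x y : E} (hx : x ∈ intrinsicInterior ℝ S) (hy : y ∈ S) :
    ∃ ε : ℝ, 0 < ε ∧ ε • (x - y) + x ∈ S := by
  obtain ⟨x', hx', hxx⟩ := hx
  have hxS : x ∈ S := by
    have := interior_subset hx'
    simpa [hxx] using this
  have hxA : x ∈ affineSpan ℝ S := subset_affineSpan ℝ S hxS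
  have hyA : y ∈ affineSpan ℝ S := subset_affineSpan ℝ S hy
  have hmem : ∀ ε : ℝ, ε • (x - y) + x ∈ affineSpan ℝ S := fun ε => by
    have := (affineSpan ℝ S).smul_vsub_vadd_mem ε hxA hyA hxA
    simpa [vsub_eq_sub, vadd_eq_add] using this
  set f : ℝ → (affineSpan ℝ S : Set E) := fun ε => ⟨ε • (x - y) + x, hmem ε⟩ with hf
  have hcont : Continuous f := by
    apply Continuous.subtype_mk
    continuity
  have hf0 : f 0 = x' := by
    apply Subtype.ext
    simp [hf, hxx]
  have hopen : IsOpen (f ⁻¹' interior (((↑) : (affineSpan ℝ S : Set E) → E) ⁻¹' S)) :=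
    isOpen_interior.preimage hcont
  have h0 : (0 : ℝ) ∈ f ⁻¹' interior (((↑) : (affineSpan ℝ S : Set E) → E) ⁻¹' S) := by
    simp only [Set.mem_preimage, hf0]; exact hx'
  obtain ⟨δ, hδ, hball⟩ := Metric.isOpen_iff.1 hopen 0 h0
  refine ⟨δ / 2, by positivity, ?_⟩
  have : (δ / 2) ∈ Metric.ball (0 : ℝ) δ := by
    rw [Metric.mem_ball, Real.dist_eq, sub_zero, abs_of_pos (by positivity : (0:ℝ) < δ/2)]
    linarith
  have := interior_subset (hball this)
  simpa using this

/-- A vector in the normal cone at `X ∈ C` is maximized over `C` at `X`. -/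
lemma normCone_max {C : Set E} {X lam : E} (hlam : lam ∈ normCone C X) :
    ∀ c' ∈ C, (inner ℝ lam c' : ℝ) ≤ inner ℝ lam X := by
  intro c' hc'
  have := hlam (c' - X) ⟨1, zero_le_one, c', hc', by simp⟩
  rw [inner_sub_right] at this; linarith

/-- A vector in the relative interior of the normal cone at a relative interior point of a
face `F` is maximized over `C` exactly on `F`. -/
lemma face_char {C F : Set E} (hF : IsFace C F) {X lam : E}
    (hX : X ∈ intrinsicInterior ℝ F) (hlam : lam ∈ intrinsicInterior ℝ (normCone C X)) :
    ∀ H : E, H ∈ F ↔ H ∈ C ∧ (inner ℝ lam H : ℝ) = inner ℝ lam X := by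
  obtain ⟨-, μ, c, hμ, hFeq⟩ := hF
  have hFC : F ⊆ C := by rw [hFeq]; exact fun H h => h.1
  have hXF : X ∈ F := intrinsicInterior_subset hX
  have lamN : lam ∈ normCone C X := intrinsicInterior_subset hlam
  have hmax := normCone_max lamN
  have hμX : (inner ℝ μ X : ℝ) = c := (hFeq ▸ hXF).2
  have μN : μ ∈ normCone C X := by
    rintro X' ⟨t, ht, c', hc', rfl⟩
    rw [inner_smul_right, inner_sub_right, hμX]
    have := hμ c' hc'
    nlinarith
  intro H
  constructor
  · intro hHF
    obtain ⟨ε, hε, hεmem⟩ := relint_extend hX hHF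
    have := hmax _ (hFC hεmem)
    rw [inner_add_right, inner_smul_right, inner_sub_right] at this
    have h1 := hmax H (hFC hHF)
    exact ⟨hFC hHF, by nlinarith⟩
  · rintro ⟨hHC, heq⟩
    obtain ⟨ε, hε, hεmem⟩ := relint_extend hlam μN
    have hμH : (inner ℝ μ H : ℝ) ≤ c := hμ H hHC
    have := hεmem (H - X) ⟨1, zero_le_one, H, hHC, by simp⟩
    rw [inner_add_left, inner_smul_left, inner_sub_left, inner_sub_right, inner_sub_right,
      RCLike.conj_to_real, heq, hμX] at this
    rw [hFeq]
    refine ⟨hHC, ?_⟩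
    nlinarith

/-- If `projOn bᗮ lam = ξ`, then `lam` and `ξ` have the same inner products against
vectors of `bᗮ`. -/
lemma inner_eq_of_proj {b : Submodule ℝ E} {lam ξ : E} (h : projOn bᗮ lam = ξ)
    {v : E} (hv : v ∈ bᗮ) : (inner ℝ lam v : ℝ) = inner ℝ ξ v := by
  have hmem : lam - ξ ∈ bᗮᗮ := by
    rw [← h]
    exact Submodule.sub_starProjection_mem_orthogonal (K := bᗮ) lam
  have : (inner ℝ v (lam - ξ) : ℝ) = 0 :=
    Submodule.inner_right_of_mem_orthogonal hv hmem
  rw [real_inner_comm, inner_sub_left] at this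
  linarith

theorem stmt_8 (C : Set E) (hC : IsFGConvex C) (hne : C.Nonempty)
    (b : Submodule ℝ E)
    (hdim : Module.finrank ℝ
        (Submodule.span ℝ (polarCone (asympCone C) + (b : Set E))) = Module.finrank ℝ E)
    (ξ : E) (hξb : ξ ∈ bᗮ)
    (hξ : ξ ∈ projOn bᗮ '' polarCone (asympCone C))
    (hgen : ∀ F : Set E, IsFace C F →
      Module.finrank ℝ (Submodule.span ℝ (projOn bᗮ '' aFplus C F)) < Module.finrank ℝ bᗮ →
      ξ ∉ projOn bᗮ '' aFplus C F)
    (F₁ F₂ : Set E)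
    (hF₁ : IsFace C F₁ ∧ ξ ∈ projOn bᗮ '' aFplus C F₁)
    (hF₂ : IsFace C F₂ ∧ ξ ∈ projOn bᗮ '' aFplus C F₂) :
    projOn b '' F₁ ∩ projOn b '' F₂ = projOn b '' (F₁ ∩ F₂) := by
  obtain ⟨hface₁, lam₁, hlam₁, hproj₁⟩ := hF₁
  obtain ⟨hface₂, lam₂, hlam₂, hproj₂⟩ := hF₂
  simp only [aFplus, Set.mem_iUnion] at hlam₁ hlam₂
  obtain ⟨X₁, hX₁, hl₁⟩ := hlam₁
  obtain ⟨X₂, hX₂, hl₂⟩ := hlam₂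
  have char₁ := face_char hface₁ hX₁ hl₁
  have char₂ := face_char hface₂ hX₂ hl₂
  apply Set.Subset.antisymm
  · rintro z ⟨⟨H₁, hH₁, rfl⟩, ⟨H₂, hH₂, heq⟩⟩
    -- H₁ - H₂ ∈ bᗮ
    have hsub : H₁ - H₂ ∈ bᗮ := by
      rw [← Submodule.orthogonalProjectionOnto_eq_zero_iff]
      apply Subtype.coe_injective
      have : projOn b H₁ - projOn b H₂ = 0 := by rw [heq, sub_self]
      simpa [projOn, map_sub] using this
    have e1 : (inner ℝ lam₁ H₁ : ℝ) = inner ℝ lam₁ X₁ := ((char₁ H₁).1 hH₁).2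
    have e2 : (inner ℝ lam₂ H₂ : ℝ) = inner ℝ lam₂ X₂ := ((char₂ H₂).1 hH₂).2
    have hH₁C : H₁ ∈ C := ((char₁ H₁).1 hH₁).1
    have hH₂C : H₂ ∈ C := ((char₂ H₂).1 hH₂).1
    have m2 : (inner ℝ lam₁ H₂ : ℝ) ≤ inner ℝ lam₁ X₁ :=
      normCone_max (intrinsicInterior_subset hl₁) H₂ hH₂C
    have m1 : (inner ℝ lam₂ H₁ : ℝ) ≤ inner ℝ lam₂ X₂ :=
      normCone_max (intrinsicInterior_subset hl₂) H₁ hH₁C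
    have o1 : (inner ℝ lam₁ (H₁ - H₂) : ℝ) = inner ℝ ξ (H₁ - H₂) :=
      inner_eq_of_proj hproj₁ hsub
    have o2 : (inner ℝ lam₂ (H₁ - H₂) : ℝ) = inner ℝ ξ (H₁ - H₂) :=
      inner_eq_of_proj hproj₂ hsub
    rw [inner_sub_right] at o1 o2
    have hξ0 : (inner ℝ ξ (H₁ - H₂) : ℝ) = 0 := by
      have h1 : (0:ℝ) ≤ inner ℝ ξ (H₁ - H₂) := by rw [← o1]; linarith
      have h2 : (inner ℝ ξ (H₁ - H₂) : ℝ) ≤ 0 := by rw [← o2]; linarith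
      linarith
    rw [inner_sub_right] at hξ0
    have hH₁F₂ : H₁ ∈ F₂ := (char₂ H₁).2 ⟨hH₁C, by linarith⟩
    exact ⟨H₁, ⟨hH₁, hH₁F₂⟩, rfl⟩
  · exact Set.image_inter_subset _ _ _
end
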